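/- There do not exist derivations D₁ and D₂ of the Lie algebra rh₃ = h₃ × ℝ such that D₁ and D₂ commute (D₁ ∘ D₂ = D₂ ∘ D₁), both are semisimple as endomorphisms of the underlying 4-dimensional real vector space, the characteristic polynomial of D₁ is X²(X − 1)², and the characteristic polynomial of D₂ is X²(X² + 1). -/

import Mathlib

set_option linter.unusedTactic false
set_option linter.unnecessarySeqFocus false
set_option linter.unreachableTactic false

open Polynomial

/-- The 3-dimensional Heisenberg Lie algebra `h₃`: the real vector space `Fin 3 → ℝ`
with basis `e₁, e₂, e₃` and only nonzero bracket `⁅e₁, e₂⁆ = e₃`. -/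
def H3 : Type := Fin 3 → ℝ

noncomputable instance : AddCommGroup H3 := Pi.addCommGroup
noncomputable instance : Module ℝ H3 := Pi.module _ _ _
instance : FiniteDimensional ℝ H3 := inferInstanceAs (FiniteDimensional ℝ (Fin 3 → ℝ))

lemma H3.add_apply (x y : H3) (i : Fin 3) : (x + y) i = x i + y i := rfl
lemma H3.smul_apply (r : ℝ) (x : H3) (i : Fin 3) : (r • x) i = r * x i := rfl

noncomputable instance : LieRing H3 :=
  { (inferInstance : AddCommGroup H3) with
    bracket := fun x y => ![0, 0, x 0 * y 1 - x 1 * y 0]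
    add_lie := by
      intro x y z
      show (![_,_,_] : Fin 3 → ℝ) = @HAdd.hAdd (Fin 3 → ℝ) (Fin 3 → ℝ) (Fin 3 → ℝ) _ ![_,_,_] ![_,_,_]
      funext i
      fin_cases i <;> simp [H3.add_apply] <;> ring
    lie_add := by
      intro x y z
      show (![_,_,_] : Fin 3 → ℝ) = @HAdd.hAdd (Fin 3 → ℝ) (Fin 3 → ℝ) (Fin 3 → ℝ) _ ![_,_,_] ![_,_,_]
      funext i
      fin_cases i <;> simp [H3.add_apply] <;> ring
    lie_self := by
      intro x
      show (![_,_,_] : Fin 3 → ℝ) = 0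
      funext i
      fin_cases i <;> simp <;> ring
    leibniz_lie := by
      intro x y z
      show (![_,_,_] : Fin 3 → ℝ) = @HAdd.hAdd (Fin 3 → ℝ) (Fin 3 → ℝ) (Fin 3 → ℝ) _ ![_,_,_] ![_,_,_]
      funext i
      fin_cases i <;> simp [H3.add_apply] <;> ring }

noncomputable instance : LieAlgebra ℝ H3 :=
  { lie_smul := by
      intro r x y
      show (![_,_,_] : Fin 3 → ℝ) = @HSMul.hSMul ℝ (Fin 3 → ℝ) (Fin 3 → ℝ) _ r ![_,_,_]
      funext i
      fin_cases i <;> simp [H3.smul_apply] <;> ring }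

/-- `rh₃ := h₃ × ℝ`, the product Lie algebra of the Heisenberg Lie algebra `h₃` with the
1-dimensional abelian Lie algebra `ℝ`. -/
def RH3 : Type := H3 × ℝ

noncomputable instance : AddCommGroup RH3 := inferInstanceAs (AddCommGroup (H3 × ℝ))
noncomputable instance : Module ℝ RH3 := inferInstanceAs (Module ℝ (H3 × ℝ))
instance : FiniteDimensional ℝ RH3 := inferInstanceAs (FiniteDimensional ℝ (H3 × ℝ))

noncomputable instance : LieRing RH3 :=
  { (inferInstance : AddCommGroup RH3) with
    bracket := fun x y => (⁅x.1, y.1⁆, 0)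
    add_lie := by
      intro x y z
      show (⁅x.1 + y.1, z.1⁆, (0:ℝ)) = (⁅x.1, z.1⁆ + ⁅y.1, z.1⁆, 0 + 0)
      simp [add_lie]
    lie_add := by
      intro x y z
      show (⁅x.1, y.1 + z.1⁆, (0:ℝ)) = (⁅x.1, y.1⁆ + ⁅x.1, z.1⁆, 0 + 0)
      simp [lie_add]
    lie_self := by
      intro x
      show (⁅x.1, x.1⁆, (0:ℝ)) = (0, 0)
      simp
    leibniz_lie := by
      intro x y z
      show (⁅x.1, ⁅y.1, z.1⁆⁆, (0:ℝ)) = (⁅⁅x.1, y.1⁆, z.1⁆ + ⁅y.1, ⁅x.1, z.1⁆⁆, 0 + 0)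
      rw [← leibniz_lie]
      simp }

noncomputable instance : LieAlgebra ℝ RH3 :=
  { lie_smul := by
      intro r x y
      show (⁅x.1, r • y.1⁆, (0:ℝ)) = (r • ⁅x.1, y.1⁆, r • (0:ℝ))
      simp }


set_option maxHeartbeats 1000000
section AuxNoCommSS

open Matrix

/-- Coordinate equivalence of `RH3` with `Fin 4 → ℝ`. -/
noncomputable def coordEquiv : RH3 ≃ₗ[ℝ] (Fin 4 → ℝ) where
  toFun x := ![x.1 0, x.1 1, x.1 2, x.2]
  invFun v := (![v 0, v 1, v 2], v 3)
  map_add' x y := by funext i; fin_cases i <;> rfl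
  map_smul' r x := by funext i; fin_cases i <;> rfl
  left_inv x := by
    refine Prod.ext ?_ rfl
    funext i; fin_cases i <;> rfl
  right_inv v := by funext i; fin_cases i <;> rfl

lemma coordEquiv_0 (x : RH3) : coordEquiv x 0 = x.1 0 := rfl
lemma coordEquiv_1 (x : RH3) : coordEquiv x 1 = x.1 1 := rfl
lemma coordEquiv_2 (x : RH3) : coordEquiv x 2 = x.1 2 := rfl
lemma coordEquiv_3 (x : RH3) : coordEquiv x 3 = x.2 := rfl

/-- The standard basis vectors of `RH3`. -/
noncomputable def EE : Fin 4 → RH3 :=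
  ![(![1,0,0], 0), (![0,1,0], 0), (![0,0,1], 0), (![0,0,0], 1)]

lemma EE_fst (i : Fin 4) (j : Fin 3) : (EE i).1 j = if (i : ℕ) = j then 1 else 0 := by
  fin_cases i <;> fin_cases j <;> rfl

lemma EE_snd (i : Fin 4) : (EE i).2 = if i = 3 then 1 else 0 := by
  fin_cases i <;> rfl

lemma RH3_zero_fst (j : Fin 3) : (0 : RH3).1 j = 0 := rfl

noncomputable def rh3Basis : Module.Basis (Fin 4) ℝ RH3 := Module.Basis.ofEquivFun coordEquiv

lemma rh3Basis_eq (i : Fin 4) : rh3Basis i = EE i := by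
  rw [show rh3Basis i = coordEquiv.symm (Pi.single i 1) from
    congrFun (Module.Basis.coe_ofEquivFun coordEquiv) i]
  apply coordEquiv.injective
  simp only [LinearEquiv.apply_symm_apply]
  fin_cases i <;> (funext j; fin_cases j <;> simp [coordEquiv_0, coordEquiv_1, coordEquiv_2, coordEquiv_3, EE_fst, EE_snd])

lemma rh3_bracket_def (x y : RH3) :
    ⁅x, y⁆ = ((![0, 0, x.1 0 * y.1 1 - x.1 1 * y.1 0] : Fin 3 → ℝ), (0:ℝ)) := rfl

lemma EE_bracket_01 : ⁅EE 0, EE 1⁆ = EE 2 := by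
  rw [rh3_bracket_def]
  refine Prod.ext ?_ rfl
  funext j; fin_cases j <;> norm_num [EE_fst, RH3_zero_fst]

lemma EE_bracket_03 : ⁅EE 0, EE 3⁆ = 0 := by
  rw [rh3_bracket_def]
  refine Prod.ext ?_ rfl
  funext j; fin_cases j <;> norm_num [EE_fst, RH3_zero_fst]

lemma EE_bracket_13 : ⁅EE 1, EE 3⁆ = 0 := by
  rw [rh3_bracket_def]
  refine Prod.ext ?_ rfl
  funext j; fin_cases j <;> norm_num [EE_fst, RH3_zero_fst]

lemma deriv_col2 (D : LieDerivation ℝ RH3 RH3) :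
    D (EE 2) = ((![0, 0, (D (EE 0)).1 0 + (D (EE 1)).1 1] : Fin 3 → ℝ), (0:ℝ)) := by
  have h := D.apply_lie_eq_add (EE 0) (EE 1)
  rw [EE_bracket_01] at h
  rw [h]
  refine Prod.ext ?_ (by rw [rh3_bracket_def, rh3_bracket_def]; show (0:ℝ) + 0 = 0; norm_num)
  funext j
  rw [show (⁅EE 0, D (EE 1)⁆ + ⁅D (EE 0), EE 1⁆).1 j
      = ⁅EE 0, D (EE 1)⁆.1 j + ⁅D (EE 0), EE 1⁆.1 j from rfl]
  simp only [rh3_bracket_def]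
  fin_cases j <;> norm_num [EE_fst, add_comm]

lemma deriv_col3 (D : LieDerivation ℝ RH3 RH3) :
    (D (EE 3)).1 0 = 0 ∧ (D (EE 3)).1 1 = 0 := by
  have h0 := D.apply_lie_eq_add (EE 0) (EE 3)
  have h1 := D.apply_lie_eq_add (EE 1) (EE 3)
  rw [EE_bracket_03, map_zero] at h0
  rw [EE_bracket_13, map_zero] at h1
  constructor
  · have h' : (0:ℝ) = ⁅EE 1, D (EE 3)⁆.1 2 + ⁅D (EE 1), EE 3⁆.1 2 :=
      congrArg (fun z : RH3 => z.1 2) h1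
    norm_num [rh3_bracket_def, EE] at h'
    simpa [EE] using h'
  · have h' : (0:ℝ) = ⁅EE 0, D (EE 3)⁆.1 2 + ⁅D (EE 0), EE 3⁆.1 2 :=
      congrArg (fun z : RH3 => z.1 2) h0
    norm_num [rh3_bracket_def, EE] at h'
    simpa [EE] using h'.symm

open Polynomial in
lemma charmatrix_fin4 (M : Matrix (Fin 4) (Fin 4) ℝ) : charmatrix M =
    Matrix.of ![![X - C (M 0 0), -C (M 0 1), -C (M 0 2), -C (M 0 3)],
      ![-C (M 1 0), X - C (M 1 1), -C (M 1 2), -C (M 1 3)],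
      ![-C (M 2 0), -C (M 2 1), X - C (M 2 2), -C (M 2 3)],
      ![-C (M 3 0), -C (M 3 1), -C (M 3 2), X - C (M 3 3)]] := by
  ext i j
  fin_cases i <;> fin_cases j <;> simp [charmatrix_apply, Matrix.diagonal_apply]

open Polynomial in
lemma charpoly_eval4 (M : Matrix (Fin 4) (Fin 4) ℝ) (x : ℝ) :
    eval x M.charpoly = (x - M 0 0)*( (x - M 1 1)*((x - M 2 2)*(x - M 3 3) - (-M 2 3)*(-M 3 2)) - (-M 1 2)*((-M 2 1)*(x - M 3 3) - (-M 2 3)*(-M 3 1)) + (-M 1 3)*((-M 2 1)*(-M 3 2) - (x - M 2 2)*(-M 3 1))) - (-M 0 1)*( (-M 1 0)*((x - M 2 2)*(x - M 3 3) - (-M 2 3)*(-M 3 2)) - (-M 1 2)*((-M 2 0)*(x - M 3 3) - (-M 2 3)*(-M 3 0)) + (-M 1 3)*((-M 2 0)*(-M 3 2) - (x - M 2 2)*(-M 3 0))) + (-M 0 2)*( (-M 1 0)*((-M 2 1)*(x - M 3 3) - (-M 2 3)*(-M 3 1)) - (x - M 1 1)*((-M 2 0)*(x - M 3 3) - (-M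 2 3)*(-M 3 0)) + (-M 1 3)*((-M 2 0)*(-M 3 1) - (-M 2 1)*(-M 3 0))) - (-M 0 3)*( (-M 1 0)*((-M 2 1)*(-M 3 2) - (x - M 2 2)*(-M 3 1)) - (x - M 1 1)*((-M 2 0)*(-M 3 2) - (x - M 2 2)*(-M 3 0)) + (-M 1 2)*((-M 2 0)*(-M 3 1) - (-M 2 1)*(-M 3 0))) := by
  rw [Matrix.charpoly, charmatrix_fin4]
  simp [Matrix.det_succ_row_zero, Fin.sum_univ_succ, Fin.succAbove]
  ring

open Polynomial in
lemma semisimple_aeval_zero (f : Module.End ℝ RH3) (hss : Module.End.IsSemisimple f)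
    (p : ℝ[X]) (hd : LinearMap.charpoly f ∣ p ^ 2) : aeval f p = 0 := by
  have h1 : minpoly ℝ f ∣ p ^ 2 := (LinearMap.minpoly_dvd_charpoly f).trans hd
  have h2 : minpoly ℝ f ∣ p :=
    (hss.minpoly_squarefree.dvd_pow_iff_dvd (by norm_num)).mp h1
  obtain ⟨q, hq⟩ := h2
  rw [hq, _root_.map_mul, minpoly.aeval, zero_mul]

end AuxNoCommSS

/-- There do not exist commuting derivations `D₁`, `D₂` of `rh₃ = h₃ × ℝ`, both semisimple
as endomorphisms of the underlying 4-dimensional real vector space, with characteristic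
polynomials `X² * (X - 1)²` and `X² * (X² + 1)` respectively. -/
theorem no_commuting_semisimple_derivations_rh3 :
    ¬ ∃ D₁ D₂ : LieDerivation ℝ RH3 RH3,
        D₁.toLinearMap ∘ₗ D₂.toLinearMap = D₂.toLinearMap ∘ₗ D₁.toLinearMap ∧
        Module.End.IsSemisimple (D₁.toLinearMap : Module.End ℝ RH3) ∧
        Module.End.IsSemisimple (D₂.toLinearMap : Module.End ℝ RH3) ∧
        LinearMap.charpoly D₁.toLinearMap = X ^ 2 * (X - 1) ^ 2 ∧
        LinearMap.charpoly D₂.toLinearMap = X ^ 2 * (X ^ 2 + 1) := by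
  rintro ⟨D₁, D₂, hcomm, hss1, _hss2, hcp1, hcp2⟩
  classical
  -- matrix entries
  have hent : ∀ (D : LieDerivation ℝ RH3 RH3) (i j : Fin 4),
      LinearMap.toMatrix rh3Basis rh3Basis D.toLinearMap i j = coordEquiv (D (EE j)) i := by
    intro D i j
    rw [LinearMap.toMatrix_apply, rh3Basis_eq]
    exact Module.Basis.ofEquivFun_repr_apply coordEquiv _ i
  -- structural facts about derivations
  have colf : ∀ (D : LieDerivation ℝ RH3 RH3),
      LinearMap.toMatrix rh3Basis rh3Basis D.toLinearMap 0 2 = 0 ∧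
      LinearMap.toMatrix rh3Basis rh3Basis D.toLinearMap 1 2 = 0 ∧
      LinearMap.toMatrix rh3Basis rh3Basis D.toLinearMap 3 2 = 0 ∧
      LinearMap.toMatrix rh3Basis rh3Basis D.toLinearMap 2 2 =
        LinearMap.toMatrix rh3Basis rh3Basis D.toLinearMap 0 0 +
        LinearMap.toMatrix rh3Basis rh3Basis D.toLinearMap 1 1 ∧
      LinearMap.toMatrix rh3Basis rh3Basis D.toLinearMap 0 3 = 0 ∧
      LinearMap.toMatrix rh3Basis rh3Basis D.toLinearMap 1 3 = 0 := by
    intro D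
    have h2 := deriv_col2 D
    obtain ⟨h30, h31⟩ := deriv_col3 D
    simp only [hent D]
    refine ⟨?_, ?_, ?_, ?_, ?_, ?_⟩ <;> simp only [coordEquiv_0, coordEquiv_1, coordEquiv_2, coordEquiv_3] <;>
    simp [h2, h30, h31]
  obtain ⟨e02, e12, e32, e22, e03, e13⟩ := colf D₁
  obtain ⟨f02, f12, f32, f22, f03, f13⟩ := colf D₂
  -- D₁ is idempotent
  have hf1 : D₁.toLinearMap * D₁.toLinearMap = D₁.toLinearMap := by
    have h := semisimple_aeval_zero _ hss1 (X^2 - X) (by rw [hcp1]; exact ⟨1, by ring⟩)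
    have h2 : Polynomial.aeval D₁.toLinearMap ((X:ℝ[X])^2 - X)
        = D₁.toLinearMap^2 - D₁.toLinearMap := by
      simp [map_sub, map_pow, aeval_X]
    rw [h2] at h
    have h3 := sub_eq_zero.mp h
    rwa [sq] at h3
  have hM1sq : LinearMap.toMatrix rh3Basis rh3Basis D₁.toLinearMap *
      LinearMap.toMatrix rh3Basis rh3Basis D₁.toLinearMap =
      LinearMap.toMatrix rh3Basis rh3Basis D₁.toLinearMap := by
    rw [← LinearMap.toMatrix_mul rh3Basis, hf1]
  have hMcomm : LinearMap.toMatrix rh3Basis rh3Basis D₁.toLinearMap *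
      LinearMap.toMatrix rh3Basis rh3Basis D₂.toLinearMap =
      LinearMap.toMatrix rh3Basis rh3Basis D₂.toLinearMap *
      LinearMap.toMatrix rh3Basis rh3Basis D₁.toLinearMap := by
    rw [← LinearMap.toMatrix_comp rh3Basis rh3Basis rh3Basis,
      ← LinearMap.toMatrix_comp rh3Basis rh3Basis rh3Basis, hcomm]
  -- matrix charpolys
  have hch1 : (LinearMap.toMatrix rh3Basis rh3Basis D₁.toLinearMap).charpoly
      = X^2*(X-1)^2 := by rw [LinearMap.charpoly_toMatrix]; exact hcp1
  have hch2 : (LinearMap.toMatrix rh3Basis rh3Basis D₂.toLinearMap).charpoly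
      = X^2*(X^2+1) := by rw [LinearMap.charpoly_toMatrix]; exact hcp2
  -- evaluation equations
  have q0 := congrArg (eval (0:ℝ)) hch2
  have q1 := congrArg (eval (1:ℝ)) hch2
  have qm1 := congrArg (eval (-1:ℝ)) hch2
  have q2 := congrArg (eval (2:ℝ)) hch2
  have p0 := congrArg (eval (0:ℝ)) hch1
  have p1 := congrArg (eval (1:ℝ)) hch1
  have pm1 := congrArg (eval (-1:ℝ)) hch1
  have p2 := congrArg (eval (2:ℝ)) hch1
  rw [charpoly_eval4] at q0 q1 qm1 q2 p0 p1 pm1 p2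
  simp only [f02, f12, f32, f22, f03, f13, eval_mul, eval_pow, eval_add, eval_sub, eval_one,
    eval_X, mul_zero, zero_mul, add_zero, zero_add, neg_zero, sub_zero] at q0 q1 qm1 q2
  simp only [e02, e12, e32, e22, e03, e13, eval_mul, eval_pow, eval_add, eval_sub, eval_one,
    eval_X, mul_zero, zero_mul, add_zero, zero_add, neg_zero, sub_zero] at p0 p1 pm1 p2
  -- entry equations from products
  have i00 : (LinearMap.toMatrix rh3Basis rh3Basis D₁.toLinearMap *
      LinearMap.toMatrix rh3Basis rh3Basis D₁.toLinearMap) 0 0 =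
      LinearMap.toMatrix rh3Basis rh3Basis D₁.toLinearMap 0 0 := congrArg (fun N => N 0 0) hM1sq
  have i22 : (LinearMap.toMatrix rh3Basis rh3Basis D₁.toLinearMap *
      LinearMap.toMatrix rh3Basis rh3Basis D₁.toLinearMap) 2 2 =
      LinearMap.toMatrix rh3Basis rh3Basis D₁.toLinearMap 2 2 := congrArg (fun N => N 2 2) hM1sq
  have i33 : (LinearMap.toMatrix rh3Basis rh3Basis D₁.toLinearMap *
      LinearMap.toMatrix rh3Basis rh3Basis D₁.toLinearMap) 3 3 =
      LinearMap.toMatrix rh3Basis rh3Basis D₁.toLinearMap 3 3 := congrArg (fun N => N 3 3) hM1sq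
  have c00 : (LinearMap.toMatrix rh3Basis rh3Basis D₁.toLinearMap *
      LinearMap.toMatrix rh3Basis rh3Basis D₂.toLinearMap) 0 0 =
      (LinearMap.toMatrix rh3Basis rh3Basis D₂.toLinearMap *
      LinearMap.toMatrix rh3Basis rh3Basis D₁.toLinearMap) 0 0 := congrArg (fun N => N 0 0) hMcomm
  have c01 : (LinearMap.toMatrix rh3Basis rh3Basis D₁.toLinearMap *
      LinearMap.toMatrix rh3Basis rh3Basis D₂.toLinearMap) 0 1 =
      (LinearMap.toMatrix rh3Basis rh3Basis D₂.toLinearMap *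
      LinearMap.toMatrix rh3Basis rh3Basis D₁.toLinearMap) 0 1 := congrArg (fun N => N 0 1) hMcomm
  have c10 : (LinearMap.toMatrix rh3Basis rh3Basis D₁.toLinearMap *
      LinearMap.toMatrix rh3Basis rh3Basis D₂.toLinearMap) 1 0 =
      (LinearMap.toMatrix rh3Basis rh3Basis D₂.toLinearMap *
      LinearMap.toMatrix rh3Basis rh3Basis D₁.toLinearMap) 1 0 := congrArg (fun N => N 1 0) hMcomm
  simp only [Matrix.mul_apply, Fin.sum_univ_four] at i00 i22 i33 c00 c01 c10
  simp only [e02, e12, e32, e22, e03, e13, f02, f12, f32, f22, f03, f13,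
    mul_zero, zero_mul, add_zero, zero_add] at i00 i22 i33 c00 c01 c10
  -- introduce short names
  set a := LinearMap.toMatrix rh3Basis rh3Basis D₂.toLinearMap 0 0 with ha
  set bb := LinearMap.toMatrix rh3Basis rh3Basis D₂.toLinearMap 0 1 with hbb
  set cc := LinearMap.toMatrix rh3Basis rh3Basis D₂.toLinearMap 1 0 with hcc
  set dd := LinearMap.toMatrix rh3Basis rh3Basis D₂.toLinearMap 1 1 with hdd
  set uu := LinearMap.toMatrix rh3Basis rh3Basis D₂.toLinearMap 3 3 with huu
  set al := LinearMap.toMatrix rh3Basis rh3Basis D₁.toLinearMap 0 0 with hal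
  set be := LinearMap.toMatrix rh3Basis rh3Basis D₁.toLinearMap 0 1 with hbe
  set ga := LinearMap.toMatrix rh3Basis rh3Basis D₁.toLinearMap 1 0 with hga
  set de := LinearMap.toMatrix rh3Basis rh3Basis D₁.toLinearMap 1 1 with hde
  set mu := LinearMap.toMatrix rh3Basis rh3Basis D₁.toLinearMap 3 3 with hmu
  -- consequences of the characteristic polynomial of D₂
  have k3 : 2*(a + dd) + uu = 0 := by
    linear_combination (-1/2)*q0 + (1/2)*q1 + (1/6)*qm1 + (-1/6)*q2
  have k2 : (a + dd)*uu + (a*dd - bb*cc) + (a + dd)*((a + dd) + uu) = 1 := by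
    linear_combination (-1)*q0 + (1/2)*q1 + (1/2)*qm1
  have k1 : (a + dd)^2*uu + (a*dd - bb*cc)*((a + dd) + uu) = 0 := by
    linear_combination (1/2)*q0 + (-1)*q1 + (1/3)*qm1 + (1/6)*q2
  have h5 : (a + dd)*(5*(a + dd)^2 + 1) = 0 := by
    linear_combination (-1)*k1 + (6*(a+dd)^2 + 1 - 2*(a+dd)*(2*(a+dd)+uu))*k3
      + ((2*(a+dd)+uu) - (a+dd))*k2
  have hT : a + dd = 0 := by
    rcases mul_eq_zero.mp h5 with h | h
    · exact h
    · linarith only [sq_nonneg (a + dd), h]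
  have hDelta : a*dd - bb*cc = 1 := by linear_combination k2 - (2*uu + (a + dd))*hT
  -- trace of D₁
  have k3' : 2*(al + de) + mu = 2 := by
    linear_combination (-1/2)*p0 + (1/2)*p1 + (1/6)*pm1 + (-1/6)*p2
  have hs : (al + de) * ((al + de) - 1) = 0 := by linear_combination i22
  have hmu2 : mu * mu = mu := by linear_combination i33
  rcases mul_eq_zero.mp hs with hs0 | hs1
  · have hmueq : mu = 2 := by linarith only [k3', hs0]
    rw [hmueq] at hmu2
    norm_num at hmu2
  · have hs1' : al + de = 1 := by linarith only [hs1]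
    have key : a^2 + (2*al - 1)^2 = 0 := by
      linear_combination (-(cc*(2*al-1)))*c01 + (2*a*be)*c10 + (-(2*al-1)^2)*hDelta
        + (cc*(2*al-1)*be + 2*a*be*ga + a*(2*al-1)^2)*hT
        + (-cc*(2*al-1)*bb - 2*a*be*cc)*hs1' + (-4*a^2)*i00
    have ka : a^2 = 0 := by linarith only [key, sq_nonneg a, sq_nonneg (2*al - 1)]
    have kt : (2*al - 1)^2 = 0 := by linarith only [key, sq_nonneg a, sq_nonneg (2*al - 1)]
    have ha0 : a = 0 := pow_eq_zero_iff (two_ne_zero) |>.mp ka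
    have hal0 : 2*al - 1 = 0 := pow_eq_zero_iff (two_ne_zero) |>.mp kt
    have h1 : be*cc = bb*ga := by linear_combination c00
    have h2 : bb*cc = -1 := by linear_combination (-1)*hDelta + dd*ha0
    have h3 : be*ga = 1/4 := by linear_combination i00 - ((2*al-1)/4)*hal0
    have h4 : (be*cc)*(bb*ga) = -(1/4) := by linear_combination (be*ga)*h2 - h3
    have h5' : (be*cc)^2 = -(1/4) := by linear_combination (be*cc)*h1 + h4
    linarith only [sq_nonneg (be*cc), h5']
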